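/- In the quantum torus T over Z[v^{±1}] generated by X_1^{±1}, X_2^{±1} with relation X_2 X_1 = v^2 X_1 X_2, the quantum cluster variables X_m defined by the quantum exchange relations satisfy the quasi-commutation relation X_{m+1} X_m = v^2 X_m X_{m+1} for all m ∈ Z. -/

import Mathlib

/-- in the skew field of fractions of the quantum torus, the quantum
cluster variables defined by the quantum exchange relations satisfy the
quasi-commutation relation `X (m+1) * X m = v ^ 2 * (X m * X (m+1))` for all `m`. -/
theorem quantum_cluster_quasi_commutation
    (F : Type*) [DivisionRing F]
    (b c : ℕ) (hb : 0 < b) (hc : 0 < c)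
    (v : F) (hv : v ≠ 0) (hvcentral : ∀ a : F, Commute v a)
    (X : ℤ → F) (hX : ∀ m : ℤ, X m ≠ 0)
    (hcomm : X 2 * X 1 = v ^ 2 * (X 1 * X 2))
    (hrec : ∀ m : ℤ, X (m + 1) * X (m - 1) =
      if Odd m then v ^ b * X m ^ b + 1 else v ^ c * X m ^ c + 1) :
    ∀ m : ℤ, X (m + 1) * X m = v ^ 2 * (X m * X (m + 1)) := by
  -- `X m` commutes with the right hand side of the exchange relation
  have key : ∀ m : ℤ, Commute (X m)
      (if Odd m then v ^ b * X m ^ b + 1 else v ^ c * X m ^ c + 1) := by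
    intro m
    split_ifs
    · exact (((hvcentral (X m)).symm.pow_right b).mul_right
        ((Commute.refl (X m)).pow_right b)).add_right (Commute.one_right _)
    · exact (((hvcentral (X m)).symm.pow_right c).mul_right
        ((Commute.refl (X m)).pow_right c)).add_right (Commute.one_right _)
  have hv2 : ∀ a : F, v ^ 2 * a = a * v ^ 2 := fun a => ((hvcentral a).pow_left 2).eq
  -- forward induction step
  have forward : ∀ m : ℤ, X m * X (m - 1) = v ^ 2 * (X (m - 1) * X m) →
      X (m + 1) * X m = v ^ 2 * (X m * X (m + 1)) := by
    intro m hm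
    apply mul_right_cancel₀ (hX (m - 1))
    calc X (m + 1) * X m * X (m - 1)
        = X (m + 1) * (X m * X (m - 1)) := by rw [mul_assoc]
      _ = X (m + 1) * (v ^ 2 * (X (m - 1) * X m)) := by rw [hm]
      _ = v ^ 2 * (X (m + 1) * X (m - 1) * X m) := by
          rw [← mul_assoc, ← hv2, mul_assoc (v ^ 2), ← mul_assoc (X (m + 1))]
      _ = v ^ 2 * (X m * (X (m + 1) * X (m - 1))) := by
          rw [hrec m, (key m).eq]
      _ = v ^ 2 * (X m * X (m + 1)) * X (m - 1) := by
          rw [mul_assoc (v ^ 2), mul_assoc (X m)]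
  -- backward induction step
  have backward : ∀ m : ℤ, X (m + 1) * X m = v ^ 2 * (X m * X (m + 1)) →
      X m * X (m - 1) = v ^ 2 * (X (m - 1) * X m) := by
    intro m hm
    apply mul_left_cancel₀ (hX (m + 1))
    calc X (m + 1) * (X m * X (m - 1))
        = X (m + 1) * X m * X (m - 1) := by rw [mul_assoc]
      _ = v ^ 2 * (X m * (X (m + 1) * X (m - 1))) := by
          rw [hm, mul_assoc, mul_assoc]
      _ = v ^ 2 * (X (m + 1) * X (m - 1) * X m) := by
          rw [hrec m, (key m).eq]
      _ = X (m + 1) * (v ^ 2 * (X (m - 1) * X m)) := by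
          rw [← mul_assoc (X (m + 1)), ← hv2 (X (m + 1)), mul_assoc (v ^ 2) (X (m + 1)), mul_assoc (X (m + 1))]
  intro m
  obtain ⟨n, rfl⟩ : ∃ n : ℤ, m = n + 1 := ⟨m - 1, by ring⟩
  induction n using Int.induction_on with
  | zero => simpa using hcomm
  | succ n ih =>
      have h := forward ((n : ℤ) + 1 + 1) (by
        have h' := ih
        rw [show ((n : ℤ) + 1 + 1 - 1) = (n : ℤ) + 1 by ring]
        exact h')
      convert h using 3 <;> ring
  | pred n ih =>
      have h := backward (-(n : ℤ) + 1) (by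
        have h' := ih
        rw [show (-(n : ℤ) + 1 + 1) = (-(n : ℤ) + 1 + 1) by ring]
        exact h')
      rw [show (-(n : ℤ) - 1 + 1 + 1) = (-(n : ℤ) + 1) by ring,
        show (-(n : ℤ) - 1 + 1) = (-(n : ℤ) + 1 - 1) by ring]
      exact h
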